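/- Let X be a non-separable real Banach space. The following are equivalent: (i) X has the NIP; (ii) for every nuclear continuous 2-homogeneous polynomial P : X → ℝ there exists a nonzero x_P ∈ X with P(x_P) = 0; (iii) for every nuclear continuous 2-homogeneous polynomial P : X → ℝ there exists a non-separable linear subspace M ⊆ X with P identically zero on M; (iv) for every nonzero nuclear continuous 2-homogeneous polynomial P : X → ℝ, every P-maximal subspace of X is infinite-dimensional. -/

import Mathlib

/-- `P : X → ℝ` is an `n`-homogeneous polynomial: there is a symmetric `n`-linear form `A`
with `P x = A (x, …, x)`. -/
def IsHomogPoly {X : Type*} [NormedAddCommGroup X] [NormedSpace ℝ X]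
    (n : ℕ) (P : X → ℝ) : Prop :=
  ∃ A : MultilinearMap ℝ (fun _ : Fin n => X) ℝ,
    (∀ (σ : Equiv.Perm (Fin n)) (v : Fin n → X), (A fun i => v (σ i)) = A v) ∧
    ∀ x, P x = A fun _ => x

/-- `P` is a continuous `n`-homogeneous polynomial. -/
def IsContHomogPoly {X : Type*} [NormedAddCommGroup X] [NormedSpace ℝ X]
    (n : ℕ) (P : X → ℝ) : Prop :=
  IsHomogPoly n P ∧ ∃ C : ℝ, ∀ x, ‖P x‖ ≤ C * ‖x‖ ^ n

/-- `P` is a nuclear 2-homogeneous polynomial: `P x = ∑ᵢ λ_i φ_i(x)²` for a bounded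
sequence `(φ_i)` of continuous linear functionals and an `ℓ¹` sequence `(λ_i)`. -/
def IsNuclear2 {X : Type*} [NormedAddCommGroup X] [NormedSpace ℝ X] (P : X → ℝ) : Prop :=
  ∃ (φ : ℕ → (X →L[ℝ] ℝ)) (lam : ℕ → ℝ),
    (∃ C : ℝ, ∀ i, ‖φ i‖ ≤ C) ∧ Summable (fun i => |lam i|) ∧
    ∀ x, P x = ∑' i : ℕ, lam i * (φ i x) ^ 2

/-- `M` is a `P`-maximal subspace. -/
def IsPMaximal {X : Type*} [NormedAddCommGroup X] [NormedSpace ℝ X]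
    (P : X → ℝ) (M : Submodule ℝ X) : Prop :=
  M ≠ ⊤ ∧ (∀ x ∈ M, P x = 0) ∧
    ∀ M₁ : Submodule ℝ X, M ≤ M₁ → (∀ x ∈ M₁, P x = 0) → M₁ = M

/-- `X` has the nontrivial intersection property (NIP). -/
def HasNIP (X : Type*) [NormedAddCommGroup X] [NormedSpace ℝ X] : Prop :=
  ∀ φ : ℕ → (X →L[ℝ] ℝ), (⨅ i, LinearMap.ker (φ i).toLinearMap) ≠ ⊥

section Aux

variable {X : Type*} [NormedAddCommGroup X] [NormedSpace ℝ X]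

open TopologicalSpace

/-- If `X` has the NIP, then the intersection of countably many kernels is non-separable. -/
theorem nip_inf_ker_not_separable [CompleteSpace X] (h1 : HasNIP X) (φ : ℕ → (X →L[ℝ] ℝ)) :
    ¬ IsSeparable ((⨅ i, LinearMap.ker (φ i).toLinearMap : Submodule ℝ X) : Set X) := by
  classical
  intro hsep
  obtain ⟨c, hc, hKc⟩ := hsep
  have h0c : (0 : X) ∈ closure c :=
    hKc (by exact_mod_cast Submodule.zero_mem (⨅ i, LinearMap.ker (φ i).toLinearMap))
  have hcne : c.Nonempty := closure_nonempty_iff.1 ⟨0, h0c⟩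
  obtain ⟨e, rfl⟩ := hc.exists_eq_range hcne
  set ψ : ℕ → (X →L[ℝ] ℝ) := fun n =>
    if h : e n ≠ 0 then (exists_dual_vector ℝ (e n) (norm_ne_zero_iff.2 h)).choose else 0 with hψdef
  set χ : ℕ → (X →L[ℝ] ℝ) := fun n => if n % 2 = 0 then φ (n / 2) else ψ (n / 2) with hχdef
  obtain ⟨x, hx, hx0⟩ := (Submodule.ne_bot_iff _).1 (h1 χ)
  have hχx : ∀ n, χ n x = 0 := fun n =>
    LinearMap.mem_ker.1 ((Submodule.mem_iInf _).1 hx n)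
  have hφx : ∀ i, φ i x = 0 := by
    intro i
    have := hχx (2 * i)
    have h1' : (2 * i) % 2 = 0 := by omega
    have h2' : (2 * i) / 2 = i := by omega
    simpa [hχdef, h1', h2'] using this
  have hψx : ∀ i, ψ i x = 0 := by
    intro i
    have := hχx (2 * i + 1)
    have h1' : (2 * i + 1) % 2 = 1 := by omega
    have h2' : (2 * i + 1) / 2 = i := by omega
    simpa [hχdef, h1', h2'] using this
  have hxK : x ∈ (⨅ i, LinearMap.ker (φ i).toLinearMap : Submodule ℝ X) :=
    (Submodule.mem_iInf _).2 fun i => LinearMap.mem_ker.2 (hφx i)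
  have hxcl : x ∈ closure (Set.range e) := hKc hxK
  have hxpos : 0 < ‖x‖ := norm_pos_iff.2 hx0
  obtain ⟨d, hdc, hdist⟩ := Metric.mem_closure_iff.1 hxcl (‖x‖ / 3) (by positivity)
  obtain ⟨m, rfl⟩ := hdc
  rw [dist_eq_norm] at hdist
  have hem : e m ≠ 0 := by
    intro h
    rw [h, sub_zero] at hdist
    linarith
  obtain ⟨hnorm, happ⟩ := (exists_dual_vector ℝ (e m) (norm_ne_zero_iff.2 hem)).choose_spec
  have hψm : ψ m = (exists_dual_vector ℝ (e m) (norm_ne_zero_iff.2 hem)).choose := by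
    simp [hψdef, hem]
  have happ' : ψ m (e m) = ‖e m‖ := by rw [hψm]; simpa using happ
  have h1' : ‖e m‖ = ψ m (e m) - ψ m x := by rw [happ', hψx m, sub_zero]
  have h2' : ψ m (e m) - ψ m x ≤ ‖e m - x‖ := by
    rw [← map_sub]
    calc ψ m (e m - x) ≤ |ψ m (e m - x)| := le_abs_self _
      _ ≤ ‖ψ m‖ * ‖e m - x‖ := (ψ m).le_opNorm _
      _ = ‖e m - x‖ := by rw [hψm, hnorm, one_mul]
  have h3' : ‖x‖ ≤ ‖x - e m‖ + ‖e m‖ := by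
    calc ‖x‖ = ‖(x - e m) + e m‖ := by rw [sub_add_cancel]
      _ ≤ ‖x - e m‖ + ‖e m‖ := norm_add_le _ _
  have h4' : ‖e m - x‖ = ‖x - e m‖ := norm_sub_rev _ _
  linarith

/-- If `P` has a nuclear representation via `φ`, then `P` vanishes on `⨅ ker (φ i)`. -/
theorem nuclear_vanish {P : X → ℝ} (φ : ℕ → (X →L[ℝ] ℝ)) (lam : ℕ → ℝ)
    (hrep : ∀ x, P x = ∑' i : ℕ, lam i * (φ i x) ^ 2) :
    ∀ x ∈ (⨅ i, LinearMap.ker (φ i).toLinearMap : Submodule ℝ X), P x = 0 := by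
  intro x hx
  rw [hrep]
  have : ∀ i, lam i * (φ i x) ^ 2 = 0 := by
    intro i
    have : φ i x = 0 := LinearMap.mem_ker.1 ((Submodule.mem_iInf _).1 hx i)
    simp [this]
  simp [this]

private lemma norm_term_le (ψ : ℕ → (X →L[ℝ] ℝ)) (hψ : ∀ i, ‖ψ i‖ ≤ 1) (x y : X) (i : ℕ) :
    ‖(1 / 2 : ℝ) ^ i * (ψ i x * ψ i y)‖ ≤ (1 / 2 : ℝ) ^ i * (‖x‖ * ‖y‖) := by
  have hx : |ψ i x| ≤ ‖x‖ := by
    calc |ψ i x| = ‖ψ i x‖ := rfl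
      _ ≤ ‖ψ i‖ * ‖x‖ := (ψ i).le_opNorm x
      _ ≤ 1 * ‖x‖ := mul_le_mul_of_nonneg_right (hψ i) (norm_nonneg x)
      _ = ‖x‖ := one_mul _
  have hy : |ψ i y| ≤ ‖y‖ := by
    calc |ψ i y| = ‖ψ i y‖ := rfl
      _ ≤ ‖ψ i‖ * ‖y‖ := (ψ i).le_opNorm y
      _ ≤ 1 * ‖y‖ := mul_le_mul_of_nonneg_right (hψ i) (norm_nonneg y)
      _ = ‖y‖ := one_mul _
  have h1 : ‖(1 / 2 : ℝ) ^ i * (ψ i x * ψ i y)‖ = (1 / 2 : ℝ) ^ i * (|ψ i x| * |ψ i y|) := by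
    rw [Real.norm_eq_abs, abs_mul, abs_mul, abs_pow,
      abs_of_nonneg (by norm_num : (0:ℝ) ≤ 1 / 2)]
  rw [h1]
  exact mul_le_mul_of_nonneg_left
    (mul_le_mul hx hy (abs_nonneg _) (norm_nonneg _)) (by positivity)

private lemma summable_term (ψ : ℕ → (X →L[ℝ] ℝ)) (hψ : ∀ i, ‖ψ i‖ ≤ 1) (x y : X) :
    Summable (fun i => (1 / 2 : ℝ) ^ i * (ψ i x * ψ i y)) :=
  Summable.of_norm_bounded (summable_geometric_two.mul_right (‖x‖ * ‖y‖))
    (norm_term_le ψ hψ x y)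

/-- The symmetric bilinear sum `∑ 2⁻ⁱ ψᵢ(x) ψᵢ(y)`. -/
private noncomputable def Sfun (ψ : ℕ → (X →L[ℝ] ℝ)) (x y : X) : ℝ :=
  ∑' i : ℕ, (1 / 2 : ℝ) ^ i * (ψ i x * ψ i y)

private lemma Sfun_comm (ψ : ℕ → (X →L[ℝ] ℝ)) (x y : X) : Sfun ψ x y = Sfun ψ y x :=
  tsum_congr fun i => by ring

private lemma Sfun_add_left (ψ : ℕ → (X →L[ℝ] ℝ)) (hψ : ∀ i, ‖ψ i‖ ≤ 1) (x x' y : X) :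
    Sfun ψ (x + x') y = Sfun ψ x y + Sfun ψ x' y := by
  unfold Sfun
  rw [← Summable.tsum_add (summable_term ψ hψ x y) (summable_term ψ hψ x' y)]
  exact tsum_congr fun i => by rw [map_add]; ring

private lemma Sfun_smul_left (ψ : ℕ → (X →L[ℝ] ℝ)) (c : ℝ) (x y : X) :
    Sfun ψ (c • x) y = c * Sfun ψ x y := by
  unfold Sfun
  rw [← tsum_mul_left]
  exact tsum_congr fun i => by rw [map_smul, smul_eq_mul]; ring

private lemma Sfun_add_right (ψ : ℕ → (X →L[ℝ] ℝ)) (hψ : ∀ i, ‖ψ i‖ ≤ 1) (x y y' : X) :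
    Sfun ψ x (y + y') = Sfun ψ x y + Sfun ψ x y' := by
  rw [Sfun_comm, Sfun_add_left ψ hψ, Sfun_comm ψ y x, Sfun_comm ψ y' x]

private lemma Sfun_smul_right (ψ : ℕ → (X →L[ℝ] ℝ)) (c : ℝ) (x y : X) :
    Sfun ψ x (c • y) = c * Sfun ψ x y := by
  rw [Sfun_comm, Sfun_smul_left, Sfun_comm]

/-- The symmetric 2-linear form realizing `Sfun` as a homogeneous polynomial. -/
private noncomputable def Amap (ψ : ℕ → (X →L[ℝ] ℝ)) (hψ : ∀ i, ‖ψ i‖ ≤ 1) :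
    MultilinearMap ℝ (fun _ : Fin 2 => X) ℝ where
  toFun v := Sfun ψ (v 0) (v 1)
  map_update_add' := by
    intro dec v i x y
    have hdec : dec = instDecidableEqFin 2 := Subsingleton.elim _ _
    subst hdec
    fin_cases i
    · simp only [Fin.zero_eta, Fin.isValue, Function.update_self,
        Function.update_of_ne (show (1 : Fin 2) ≠ 0 by decide)]
      exact Sfun_add_left ψ hψ x y (v 1)
    · simp only [Fin.mk_one, Fin.isValue, Function.update_self,
        Function.update_of_ne (show (0 : Fin 2) ≠ 1 by decide)]
      exact Sfun_add_right ψ hψ (v 0) x y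
  map_update_smul' := by
    intro dec v i c x
    have hdec : dec = instDecidableEqFin 2 := Subsingleton.elim _ _
    subst hdec
    fin_cases i
    · simp only [Fin.zero_eta, Fin.isValue, Function.update_self,
        Function.update_of_ne (show (1 : Fin 2) ≠ 0 by decide)]
      rw [smul_eq_mul]; exact Sfun_smul_left ψ c x (v 1)
    · simp only [Fin.mk_one, Fin.isValue, Function.update_self,
        Function.update_of_ne (show (0 : Fin 2) ≠ 1 by decide)]
      rw [smul_eq_mul]; exact Sfun_smul_right ψ c (v 0) x

end Aux

theorem nip_tfae {X : Type*} [NormedAddCommGroup X] [NormedSpace ℝ X] [CompleteSpace X]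
    (hX : ¬ TopologicalSpace.SeparableSpace X) :
    List.TFAE
      [HasNIP X,
       ∀ P : X → ℝ, IsContHomogPoly 2 P → IsNuclear2 P → ∃ x : X, x ≠ 0 ∧ P x = 0,
       ∀ P : X → ℝ, IsContHomogPoly 2 P → IsNuclear2 P →
         ∃ M : Submodule ℝ X, ¬ TopologicalSpace.IsSeparable (M : Set X) ∧ ∀ x ∈ M, P x = 0,
       ∀ P : X → ℝ, IsContHomogPoly 2 P → IsNuclear2 P → P ≠ 0 →
         ∀ M : Submodule ℝ X, IsPMaximal P M → ¬ FiniteDimensional ℝ M] := by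
  classical
  tfae_have 1 → 3 := by
    intro h1 P _ hn
    obtain ⟨φ, lam, _, _, hrep⟩ := hn
    exact ⟨⨅ i, LinearMap.ker (φ i).toLinearMap, nip_inf_ker_not_separable h1 φ,
      nuclear_vanish φ lam hrep⟩
  tfae_have 3 → 2 := by
    intro h3 P hc hn
    obtain ⟨M, hMns, hMv⟩ := h3 P hc hn
    have hMbot : M ≠ ⊥ := by
      rintro rfl
      apply hMns
      simp only [Submodule.bot_coe]
      exact (Set.countable_singleton 0).isSeparable
    obtain ⟨x, hxM, hx0⟩ := (Submodule.ne_bot_iff M).1 hMbot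
    exact ⟨x, hx0, hMv x hxM⟩
  tfae_have 2 → 1 := by
    intro h2 φ
    set ψ : ℕ → (X →L[ℝ] ℝ) := fun i => (‖φ i‖ + 1)⁻¹ • φ i with hψdef
    have hψ : ∀ i, ‖ψ i‖ ≤ 1 := by
      intro i
      have hpos : (0 : ℝ) < ‖φ i‖ + 1 := by positivity
      have hψi : ψ i = (‖φ i‖ + 1)⁻¹ • φ i := rfl
      calc ‖ψ i‖ = ‖(‖φ i‖ + 1)⁻¹‖ * ‖φ i‖ := by
            rw [hψi]; exact norm_smul ((‖φ i‖ + 1)⁻¹) (φ i)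
        _ = (‖φ i‖ + 1)⁻¹ * ‖φ i‖ := by
            rw [Real.norm_eq_abs, abs_of_nonneg (le_of_lt (inv_pos.2 hpos))]
        _ ≤ (‖φ i‖ + 1)⁻¹ * (‖φ i‖ + 1) :=
            mul_le_mul_of_nonneg_left (by linarith) (le_of_lt (inv_pos.2 hpos))
        _ = 1 := inv_mul_cancel₀ hpos.ne'
    set P : X → ℝ := fun x => Sfun ψ x x with hPdef
    have hsymm : ∀ (σ : Equiv.Perm (Fin 2)) (v : Fin 2 → X),
        ((Amap ψ hψ) fun i => v (σ i)) = (Amap ψ hψ) v := by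
      intro σ v
      have hall : ∀ j : Fin 2, j = 0 ∨ j = 1 := by decide
      show Sfun ψ (v (σ 0)) (v (σ 1)) = Sfun ψ (v 0) (v 1)
      rcases hall (σ 0) with h0 | h0 <;> rcases hall (σ 1) with h1 | h1
      · exact absurd (σ.injective (h0.trans h1.symm)) (by decide)
      · rw [h0, h1]
      · rw [h0, h1]; exact Sfun_comm ψ (v 1) (v 0)
      · exact absurd (σ.injective (h0.trans h1.symm)) (by decide)
    have hcont : IsContHomogPoly 2 P := by
      refine ⟨⟨Amap ψ hψ, hsymm, fun x => rfl⟩, ⟨2, ?_⟩⟩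
      intro x
      have hsn : Summable (fun i => ‖(1 / 2 : ℝ) ^ i * (ψ i x * ψ i x)‖) :=
        Summable.of_nonneg_of_le (fun i => norm_nonneg _) (norm_term_le ψ hψ x x)
          (summable_geometric_two.mul_right (‖x‖ * ‖x‖))
      calc ‖P x‖ ≤ ∑' i : ℕ, ‖(1 / 2 : ℝ) ^ i * (ψ i x * ψ i x)‖ :=
            norm_tsum_le_tsum_norm hsn
        _ ≤ ∑' i : ℕ, (1 / 2 : ℝ) ^ i * (‖x‖ * ‖x‖) :=
            Summable.tsum_le_tsum (norm_term_le ψ hψ x x) hsn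
              (summable_geometric_two.mul_right (‖x‖ * ‖x‖))
        _ = 2 * (‖x‖ * ‖x‖) := by rw [tsum_mul_right, tsum_geometric_two]
        _ = 2 * ‖x‖ ^ 2 := by ring
    have hnuc : IsNuclear2 P := by
      refine ⟨ψ, fun i => (1 / 2 : ℝ) ^ i, ⟨1, hψ⟩, ?_, ?_⟩
      · have : (fun i => |(1 / 2 : ℝ) ^ i|) = fun i => (1 / 2 : ℝ) ^ i := by
          funext i
          rw [abs_of_nonneg (by positivity)]
        rw [this]
        exact summable_geometric_two
      · intro x
        exact tsum_congr fun i => by ring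
    obtain ⟨x, hx0, hPx⟩ := h2 P hcont hnuc
    have hterm : ∀ i, (1 / 2 : ℝ) ^ i * (ψ i x * ψ i x) = 0 := by
      intro i
      have hnn : ∀ j, (0 : ℝ) ≤ (1 / 2 : ℝ) ^ j * (ψ j x * ψ j x) := fun j =>
        mul_nonneg (by positivity) (mul_self_nonneg _)
      have hle := Summable.le_tsum (summable_term ψ hψ x x) i (fun j _ => hnn j)
      have : (∑' j : ℕ, (1 / 2 : ℝ) ^ j * (ψ j x * ψ j x)) = 0 := hPx
      linarith [hnn i]
    have hψx : ∀ i, ψ i x = 0 := by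
      intro i
      have h2i : ((1 : ℝ) / 2) ^ i ≠ 0 := by positivity
      have := mul_eq_zero.1 (hterm i)
      rcases this with h | h
      · exact absurd h h2i
      · exact mul_self_eq_zero.1 h
    have hφx : ∀ i, φ i x = 0 := by
      intro i
      have hpos : (0 : ℝ) < ‖φ i‖ + 1 := by positivity
      have := hψx i
      rw [hψdef] at this
      simp only [ContinuousLinearMap.smul_apply, smul_eq_mul] at this
      rcases mul_eq_zero.1 this with h | h
      · exact absurd h (inv_ne_zero hpos.ne')
      · exact h
    exact (Submodule.ne_bot_iff _).2
      ⟨x, (Submodule.mem_iInf _).2 fun i => LinearMap.mem_ker.2 (hφx i), hx0⟩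
  tfae_have 1 → 4 := by
    intro h1 P _ hn hP0 M hM hfin
    obtain ⟨φ, lam, _, _, hrep⟩ := hn
    set K : Submodule ℝ X := ⨅ i, LinearMap.ker (φ i).toLinearMap with hKdef
    have hsup : ∀ x ∈ M ⊔ K, P x = 0 := by
      intro x hx
      obtain ⟨m, hm, k, hk, rfl⟩ := Submodule.mem_sup.1 hx
      have hφk : ∀ i, φ i k = 0 := fun i =>
        LinearMap.mem_ker.1 ((Submodule.mem_iInf _).1 hk i)
      have : P (m + k) = P m := by
        rw [hrep, hrep]
        exact tsum_congr fun i => by rw [map_add, hφk, add_zero]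
      rw [this]
      exact hM.2.1 m hm
    have hKM : K ≤ M := by
      have heq : M ⊔ K = M := hM.2.2 (M ⊔ K) le_sup_left hsup
      exact le_sup_right.trans heq.le
    haveI : FiniteDimensional ℝ M := hfin
    haveI : FiniteDimensional ℝ K := Submodule.finiteDimensional_of_le hKM
    apply nip_inf_ker_not_separable h1 φ
    rw [← hKdef, ← Subtype.range_coe (s := (K : Set X))]
    exact TopologicalSpace.isSeparable_range continuous_subtype_val
  tfae_have 4 → 2 := by
    intro h4 P hc hn
    obtain ⟨φ, lam, hbd, hsum, hrep⟩ := hn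
    have hP0 : P 0 = 0 := by
      rw [hrep]; simp
    by_cases hP : P = 0
    · have hnt : Nontrivial X := by
        by_contra hnt
        exact hX ⟨⟨Set.univ, @Set.countable_univ _
          (@Subsingleton.to_countable _ (not_nontrivial_iff_subsingleton.1 hnt)), dense_univ⟩⟩
      obtain ⟨x, hx⟩ := exists_ne (0 : X)
      exact ⟨x, hx, by rw [hP]; rfl⟩
    · set s : Set (Submodule ℝ X) := {M | ∀ x ∈ M, P x = 0} with hsdef
      have hchain : ∀ c ⊆ s, IsChain (· ≤ ·) c → ∃ ub ∈ s, ∀ z ∈ c, z ≤ ub := by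
        intro c hcs hchain
        by_cases hce : c.Nonempty
        · refine ⟨sSup c, ?_, fun z hz => le_sSup hz⟩
          intro x hx
          obtain ⟨M, hMc, hxM⟩ := (Submodule.mem_sSup_of_directed hce hchain.directedOn).1 hx
          exact hcs hMc x hxM
        · refine ⟨⊥, ?_, fun z hz => absurd ⟨z, hz⟩ hce⟩
          intro x hx
          rw [Submodule.mem_bot] at hx
          rw [hx]; exact hP0
      obtain ⟨m, hm⟩ := zorn_le₀ s hchain
      have hPmax : IsPMaximal P m := by
        refine ⟨?_, hm.prop, fun M₁ hle hvan => le_antisymm (hm.2 hvan hle) hle⟩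
        intro heq
        exact hP (funext fun x => hm.prop x (heq ▸ Submodule.mem_top))
      have hmbot : m ≠ ⊥ := by
        intro h
        exact h4 P hc ⟨φ, lam, hbd, hsum, hrep⟩ hP m hPmax (h ▸ inferInstance)
      obtain ⟨x, hxm, hx0⟩ := (Submodule.ne_bot_iff m).1 hmbot
      exact ⟨x, hx0, hm.prop x hxm⟩
  tfae_finish
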